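/- Let 𝒜 be an irreducible Coxeter arrangement with Coxeter group W and m: 𝒜 → ℤ any multiplicity. Define m*(H) := max_{w ∈ W} (2·⌊m(wH)/2⌋ + 1). Then D(𝒜, m)^W = D(𝒜, m*)^W. -/

import Mathlib

/-!
Common setup for formalizing "Primitive derivations, Shi arrangements,
and Bandlow-Musiker-Wagon identities" style results on equivariant
multiplicities of Coxeter arrangements (Abe–Terao).

We work with the polynomial ring `S = ℝ[x_1, …, x_n]` (the symmetric algebra
of `V*` in orthonormal coordinates), its fraction field `F`, and the module
`Der_F` of ℝ-linear derivations of `F`.  All structures of the paper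
(the Coxeter arrangement `𝒜`, the Coxeter group `W` with its actions,
basic invariants, the primitive derivation, the Levi-Civita connection `∇`,
the module `D(𝒜, −∞)` and the modules `D(𝒜, m)`) are packaged, with their
characterizing properties, in the structures `CoxSetup` / `CoxSetup2` below.
-/

open MvPolynomial

noncomputable section

set_option synthInstance.maxHeartbeats 1000000
set_option maxHeartbeats 1000000

/-- `S`: the symmetric algebra of `V*`, i.e. the polynomial ring in the
orthonormal coordinates `x_1, …, x_n` of the `n`-dimensional Euclidean space `V`. -/
abbrev SS (n : ℕ) : Type := MvPolynomial (Fin n) ℝ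

/-- `F`: the quotient field of `S`. -/
abbrev FF (n : ℕ) : Type := FractionRing (SS n)

/-- `Der_F`: the `F`-module of ℝ-linear derivations of `F`. -/
abbrev DerF (n : ℕ) : Type := Derivation ℝ (FF n) (FF n)

variable {n : ℕ}

/-- The canonical embedding `S → F`. -/
def toF (f : SS n) : FF n := algebraMap (SS n) (FF n) f

/-- The coordinate `x_i`, viewed in `F`. -/
def XF (i : Fin n) : FF n := toF (X i)

/-- `f ∈ α^m ⬝ S_{(α)}` inside `F`, where `S_{(α)}` is the localization of `S`
at the prime ideal `(α)` and `m ∈ ℤ`. -/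
def MemLoc (α : SS n) (m : ℤ) (f : FF n) : Prop :=
  ∃ s t : SS n, t ∉ Ideal.span ({α} : Set (SS n)) ∧
    f * toF t = (toF α) ^ m * toF s

/-- `f ∈ F` is homogeneous of degree `d ∈ ℤ` (a quotient of homogeneous
polynomials whose degrees differ by `d`). -/
def HomogF (f : FF n) (d : ℤ) : Prop :=
  ∃ (s t : SS n) (a b : ℕ), t ≠ 0 ∧ s.IsHomogeneous a ∧ t.IsHomogeneous b ∧
    (a : ℤ) - (b : ℤ) = d ∧ f * toF t = toF s

/-- A derivation `θ ≠ 0` is homogeneous of degree `d`: `θ(α)` is homogeneous of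
degree `d` whenever `θ(α) ≠ 0`, for `α ∈ V*` (degree-one forms). -/
def DerHomog (θ : DerF n) (d : ℤ) : Prop :=
  θ ≠ 0 ∧ ∀ p : SS n, p.IsHomogeneous 1 →
    θ (toF p) = 0 ∨ HomogF (θ (toF p)) d

/-- The inner product `I*` on linear forms, in the orthonormal coordinates. -/
def ip1 (p q : SS n) : ℝ :=
  ∑ i, p.coeff (Finsupp.single i 1) * q.coeff (Finsupp.single i 1)

/-- `θ` restricts to a derivation of `S` (an element of `Der_S`). -/
def IsPolyDer (θ : DerF n) : Prop := ∀ i : Fin n, ∃ s : SS n, θ (XF i) = toF s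

/-- Conjugation of a derivation by a field automorphism: `θ ↦ e ∘ θ ∘ e⁻¹`.
This is the natural action of automorphisms on `Der_F`. -/
def conjDer (e : FF n ≃ₐ[ℝ] FF n) (θ : DerF n) : DerF n where
  toLinearMap := e.toLinearMap ∘ₗ θ.toLinearMap ∘ₗ e.symm.toLinearMap
  map_one_eq_zero' := by
    simp [Derivation.map_one_eq_zero]
  leibniz' := by
    intro a b
    have h : e.symm (a * b) = e.symm a * e.symm b := map_mul _ _ _
    simp only [LinearMap.coe_comp, Function.comp_apply, AlgEquiv.toLinearMap_apply,
      Derivation.coeFn_coe, h, Derivation.leibniz, smul_eq_mul, map_add, map_mul,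
      AlgEquiv.apply_symm_apply]

/-- The index of the top-degree basic invariant. -/
def lastIdx (n : ℕ) (hn : 0 < n) : Fin n := ⟨n - 1, Nat.sub_lt hn Nat.one_pos⟩

/-- Integer iterates of a map `f` whose inverse (on the relevant set) is `g`. -/
def zpowIter {X : Type*} (f g : X → X) : ℤ → X → X
  | Int.ofNat k => f^[k]
  | Int.negSucc k => g^[k + 1]

/-- `Θ` is a basis of the set `M ⊆ Der_F` over the subring of `S` given by the
set of coefficients `Coef` (e.g. `Coef = Set.univ` for an `S`-basis, `Coef = R`
for an `R`-basis, `Coef = T` for a `T`-basis). -/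
def isBasisOver {ι : Type*} (Coef : Set (SS n)) (Θ : ι → DerF n)
    (M : Set (DerF n)) : Prop :=
  (∀ i, Θ i ∈ M) ∧
  (∀ c : ι →₀ SS n, (∀ i, c i ∈ Coef) →
    (c.sum fun i f => toF f • Θ i) = 0 → c = 0) ∧
  (∀ δ ∈ M, ∃ c : ι →₀ SS n, (∀ i, c i ∈ Coef) ∧
    δ = c.sum fun i f => toF f • Θ i)

/-- `θ_1, …, θ_n` is an `S`-basis of the set `M ⊆ Der_F`. -/
def IsSBasis {ι : Type*} [Fintype ι] (Θ : ι → DerF n) (M : Set (DerF n)) : Prop :=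
  (∀ i, Θ i ∈ M) ∧
  (∀ c : ι → SS n, (∑ i, toF (c i) • Θ i) = 0 → ∀ i, c i = 0) ∧
  (∀ δ ∈ M, ∃ c : ι → SS n, δ = ∑ i, toF (c i) • Θ i)

/-- An `n`-dimensional irreducible Coxeter arrangement `𝒜` (hyperplanes indexed
by `hyp`, with defining linear forms `α`), together with its Coxeter group `W`
(acting orthogonally on `V`, hence on `S`, on `F` and on hyperplanes), a set of
basic invariants `P_1, …, P_n` of degrees `d_1 ≤ … ≤ d_n = h`, the partial
derivatives `∂/∂x_i` and `∂/∂P_i` (so `D = ∂/∂P_n` is a primitive derivation),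
the Euler derivation `E`, the Levi-Civita connection `∇` of the flat metric `I`,
the module `D(𝒜, −∞)` of Abe–Terao, and the inverse of the `T`-linear
automorphism `∇_D` of `D(𝒜, −∞)^W`. -/
structure CoxSetup (n : ℕ) (hn : 0 < n) (hyp W : Type)
    [Fintype hyp] [Group W] [Fintype W] : Type where
  hypNe : Nonempty hyp
  /-- the defining linear forms of the hyperplanes -/
  α : hyp → SS n
  α_ne : ∀ H, α H ≠ 0
  α_hom : ∀ H, (α H).IsHomogeneous 1
  α_red : ∀ H H' : hyp, (∃ c : ℝ, c ≠ 0 ∧ α H = c • α H') → H = H'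
  /-- the action of `W` on `S` by graded `ℝ`-algebra automorphisms -/
  actS : W →* (SS n ≃ₐ[ℝ] SS n)
  actS_lin : ∀ (w : W) (p : SS n), p.IsHomogeneous 1 → (actS w p).IsHomogeneous 1
  /-- `W` acts orthogonally -/
  actS_orth : ∀ (w : W) (p q : SS n), p.IsHomogeneous 1 → q.IsHomogeneous 1 →
      ip1 (actS w p) (actS w q) = ip1 p q
  actS_faithful : ∀ w : W, (∀ f, actS w f = f) → w = 1
  /-- the action of `W` on the set of hyperplanes -/
  σ : W →* Equiv.Perm hyp
  σ_compat : ∀ (w : W) (H : hyp), ∃ c : ℝ, c ≠ 0 ∧ actS w (α H) = c • α (σ w H)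
  /-- the orthogonal reflection through each hyperplane of `𝒜` -/
  reflW : hyp → W
  reflW_α : ∀ H, actS (reflW H) (α H) = - α H
  reflW_fix : ∀ (H) (p : SS n), p.IsHomogeneous 1 → ip1 p (α H) = 0 →
      actS (reflW H) p = p
  /-- `W` is generated by the reflections -/
  W_gen : Subgroup.closure (Set.range reflW) = (⊤ : Subgroup W)
  /-- `𝒜` is the full reflection arrangement of `W` -/
  hyp_all : ∀ (w : W) (p : SS n), p.IsHomogeneous 1 → p ≠ 0 → actS w p = -p →
      (∀ q : SS n, q.IsHomogeneous 1 → ip1 p q = 0 → actS w q = q) →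
      ∃ (H : hyp) (c : ℝ), c ≠ 0 ∧ p = c • α H
  /-- irreducibility: `W` acts irreducibly on `V*` -/
  irred : ∀ U : Submodule ℝ (SS n), U ≤ Submodule.span ℝ (Set.range X) →
      (∀ (w : W), ∀ p ∈ U, actS w p ∈ U) →
      U = ⊥ ∨ U = Submodule.span ℝ (Set.range X)
  /-- the induced action of `W` on the quotient field `F` -/
  actF : W →* (FF n ≃ₐ[ℝ] FF n)
  actF_compat : ∀ (w : W) (f : SS n), actF w (toF f) = toF (actS w f)
  /-- basic invariants `P_1, …, P_n` of `W`, of degrees `d_1 ≤ … ≤ d_n = h` -/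
  P : Fin n → SS n
  d : Fin n → ℕ
  d_mono : Monotone d
  d_pos : ∀ i, 0 < d i
  P_hom : ∀ i, (P i).IsHomogeneous (d i)
  P_inv : ∀ (w : W) (i : Fin n), actS w (P i) = P i
  P_indep : AlgebraicIndependent ℝ P
  P_gen : ∀ f : SS n, (∀ w : W, actS w f = f) → f ∈ Algebra.adjoin ℝ (Set.range P)
  /-- the partial derivatives `∂/∂x_i`, as derivations of `F` -/
  dX : Fin n → DerF n
  dX_eq : ∀ i j, dX i (XF j) = if i = j then 1 else 0
  /-- the partial derivatives `∂/∂P_i`, as derivations of `F`;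
  `∂/∂P_n` is the primitive derivation `D` -/
  dP : Fin n → DerF n
  dP_eq : ∀ i j, dP i (toF (P j)) = if i = j then 1 else 0
  /-- the Euler derivation -/
  Eul : DerF n
  Eul_eq : ∀ i, Eul (XF i) = XF i
  /-- the Levi-Civita connection of the flat metric `I`, characterized in the
  orthonormal coordinates by `(∇_θ δ)(x_i) = θ(δ(x_i))` -/
  nabla : DerF n → DerF n → DerF n
  nabla_eq : ∀ (θ δ : DerF n) (i : Fin n), nabla θ δ (XF i) = θ (δ (XF i))
  /-- the module `D(𝒜, −∞) = I*(Ω¹(𝒜, ∞))` of Abe–Terao -/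
  Dinf : Set (DerF n)
  Dinf_zero : (0 : DerF n) ∈ Dinf
  Dinf_add : ∀ θ δ, θ ∈ Dinf → δ ∈ Dinf → θ + δ ∈ Dinf
  Dinf_smul : ∀ (f : SS n) (θ), θ ∈ Dinf → toF f • θ ∈ Dinf
  Dinf_poly : ∀ θ : DerF n, IsPolyDer θ → θ ∈ Dinf
  Dinf_stab : ∀ (w : W) (θ), θ ∈ Dinf → conjDer (actF w) θ ∈ Dinf
  /-- the inverse of the `T`-linear automorphism
  `∇_D : D(𝒜, −∞)^W → D(𝒜, −∞)^W` ([AT08, AT09]) -/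
  nablaDinv : DerF n → DerF n
  nablaDinv_spec : ∀ θ : DerF n, θ ∈ Dinf → (∀ w : W, conjDer (actF w) θ = θ) →
      nablaDinv θ ∈ Dinf ∧ (∀ w : W, conjDer (actF w) (nablaDinv θ) = nablaDinv θ) ∧
      nabla (dP (lastIdx n hn)) (nablaDinv θ) = θ ∧
      nablaDinv (nabla (dP (lastIdx n hn)) θ) = θ

variable {hn : 0 < n} {hyp W : Type} [Fintype hyp] [Group W] [Fintype W]

/-- The natural action of `w ∈ W` on `Der_F`. -/
def actDer (C : CoxSetup n hn hyp W) (w : W) (θ : DerF n) : DerF n :=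
  conjDer (C.actF w) θ

/-- `θ` is `W`-invariant. -/
def invDer (C : CoxSetup n hn hyp W) (θ : DerF n) : Prop :=
  ∀ w : W, actDer C w θ = θ

/-- The module `D(𝒜, m)` attached to a multiplicity `m : 𝒜 → ℤ`. -/
def Dmod (C : CoxSetup n hn hyp W) (m : hyp → ℤ) : Set (DerF n) :=
  {θ | θ ∈ C.Dinf ∧ ∀ H : hyp, MemLoc (C.α H) (m H) (θ (toF (C.α H)))}

/-- The `W`-invariant part `D(𝒜, m)^W`. -/
def DmodW (C : CoxSetup n hn hyp W) (m : hyp → ℤ) : Set (DerF n) :=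
  {θ | θ ∈ Dmod C m ∧ invDer C θ}

/-- The invariant ring `R = S^W`. -/
def Rinv (C : CoxSetup n hn hyp W) : Set (SS n) :=
  {f | ∀ w : W, C.actS w f = f}

/-- The primitive derivation `D = ∂/∂P_n`. -/
def Dprim (C : CoxSetup n hn hyp W) : DerF n := C.dP (lastIdx n hn)

/-- `T = {f ∈ R | D f = 0} = ℝ[P_1, …, P_{n-1}]`. -/
def Tker (C : CoxSetup n hn hyp W) : Set (SS n) :=
  {f | f ∈ Rinv C ∧ Dprim C (toF f) = 0}

/-- `ζ` is `m`-universal : `ζ` is a homogeneous `W`-invariant element of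
`D(𝒜, −∞)` and `Ψ_ζ : Der_S → D(𝒜, 2m)`, `θ ↦ ∇_θ ζ`, is bijective. -/
def isUniversal (C : CoxSetup n hn hyp W) (m : hyp → ℤ) (ζ : DerF n) : Prop :=
  ζ ∈ C.Dinf ∧ invDer C ζ ∧ (∃ dg : ℤ, DerHomog ζ dg) ∧
  Set.BijOn (fun θ => C.nabla θ ζ) {θ | IsPolyDer θ}
    (Dmod C fun H => 2 * m H)

/-- The equivariant odd multiplicity `m*` associated to an arbitrary
multiplicity `m`: `m*(H) = max_{w ∈ W} (2⌊m(wH)/2⌋ + 1)`. -/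
def mstar (C : CoxSetup n hn hyp W) (m : hyp → ℤ) : hyp → ℤ :=
  fun H => Finset.univ.sup' ⟨1, Finset.mem_univ 1⟩
    (fun w : W => 2 * Int.fdiv (m (C.σ w H)) 2 + 1)

/-- A `CoxSetup` whose arrangement decomposes into exactly two `W`-orbits
`𝒜 = 𝒜₁ ∪ 𝒜₂` (`orb H = true` iff `H ∈ 𝒜₁`), with basic invariants
`P^{(i)}_1, …, P^{(i)}_n` of the reflection groups `W_i` of `𝒜_i` (generated by
the reflections through the hyperplanes of `𝒜_i`), the partial derivatives
`∂/∂P^{(i)}_j`, so that `D₁ = ∂/∂P^{(1)}_n` is a primitive derivation for `𝒜₁`,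
assumed to be `W`-invariant; together with the module `D(𝒜₁, −∞)` and the
inverse of the `T₁`-linear automorphism `∇_{D₁}` of `D(𝒜₁, −∞)^{W₁}`. -/
structure CoxSetup2 (n : ℕ) (hn : 0 < n) (hyp W : Type)
    [Fintype hyp] [Group W] [Fintype W] extends CoxSetup n hn hyp W : Type where
  /-- the orbit decomposition `𝒜 = 𝒜₁ ∪ 𝒜₂`: `orb H = true` iff `H ∈ 𝒜₁` -/
  orb : hyp → Bool
  orb_equiv : ∀ (w : W) (H : hyp), orb (σ w H) = orb H
  orb_trans : ∀ H H' : hyp, orb H = orb H' → ∃ w : W, σ w H = H'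
  orb_ne1 : ∃ H, orb H = true
  orb_ne2 : ∃ H, orb H = false
  /-- basic invariants of `W₁`, of degrees `d^{(1)}_1 ≤ … ≤ d^{(1)}_n = h₁` -/
  P1 : Fin n → SS n
  d1 : Fin n → ℕ
  d1_mono : Monotone d1
  d1_pos : ∀ i, 0 < d1 i
  P1_hom : ∀ i, (P1 i).IsHomogeneous (d1 i)
  P1_inv : ∀ (H : hyp), orb H = true → ∀ i, actS (reflW H) (P1 i) = P1 i
  P1_indep : AlgebraicIndependent ℝ P1
  P1_gen : ∀ f : SS n, (∀ H : hyp, orb H = true → actS (reflW H) f = f) →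
      f ∈ Algebra.adjoin ℝ (Set.range P1)
  /-- basic invariants of `W₂`, of degrees `d^{(2)}_1 ≤ … ≤ d^{(2)}_n = h₂` -/
  P2 : Fin n → SS n
  d2 : Fin n → ℕ
  d2_mono : Monotone d2
  d2_pos : ∀ i, 0 < d2 i
  P2_hom : ∀ i, (P2 i).IsHomogeneous (d2 i)
  P2_inv : ∀ (H : hyp), orb H = false → ∀ i, actS (reflW H) (P2 i) = P2 i
  P2_indep : AlgebraicIndependent ℝ P2
  P2_gen : ∀ f : SS n, (∀ H : hyp, orb H = false → actS (reflW H) f = f) →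
      f ∈ Algebra.adjoin ℝ (Set.range P2)
  /-- the partial derivatives `∂/∂P^{(1)}_j`; `D₁ = ∂/∂P^{(1)}_n` is a
  primitive derivation corresponding to the orbit `𝒜₁` -/
  dP1 : Fin n → DerF n
  dP1_eq : ∀ i j, dP1 i (toF (P1 j)) = if i = j then 1 else 0
  /-- the partial derivatives `∂/∂P^{(2)}_j` -/
  dP2 : Fin n → DerF n
  dP2_eq : ∀ i j, dP2 i (toF (P2 j)) = if i = j then 1 else 0
  /-- the primitive derivation `D₁` is `W`-invariant -/
  D1_Winv : ∀ w : W, conjDer (actF w) (dP1 (lastIdx n hn)) = dP1 (lastIdx n hn)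
  /-- the module `D(𝒜₁, −∞)` -/
  Dinf1 : Set (DerF n)
  Eul_mem1 : Eul ∈ Dinf1
  /-- the inverse of the `T₁`-linear automorphism
  `∇_{D₁} : D(𝒜₁, −∞)^{W₁} → D(𝒜₁, −∞)^{W₁}` ([AT09]) -/
  nablaD1inv : DerF n → DerF n
  nablaD1inv_spec : ∀ θ : DerF n, θ ∈ Dinf1 →
      (∀ H : hyp, orb H = true → conjDer (actF (reflW H)) θ = θ) →
      nablaD1inv θ ∈ Dinf1 ∧
      (∀ H : hyp, orb H = true →
        conjDer (actF (reflW H)) (nablaD1inv θ) = nablaD1inv θ) ∧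
      nabla (dP1 (lastIdx n hn)) (nablaD1inv θ) = θ ∧
      nablaD1inv (nabla (dP1 (lastIdx n hn)) θ) = θ

/-- The primitive derivation `D₁` corresponding to the orbit `𝒜₁`. -/
def D1prim (C : CoxSetup2 n hn hyp W) : DerF n := C.dP1 (lastIdx n hn)

/-- The derivation `E^{(p,q)} = ∇_D^{−q} ∇_{D₁}^{q−p} E`. -/
def EulPQ (C : CoxSetup2 n hn hyp W) (p q : ℤ) : DerF n :=
  zpowIter (C.nabla (Dprim C.toCoxSetup)) C.nablaDinv (-q)
    (zpowIter (C.nabla (D1prim C)) C.nablaD1inv (q - p) C.Eul)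

/-- The multiplicity `(m₁, m₂)` taking the constant value `m₁` on `𝒜₁` and
`m₂` on `𝒜₂`. -/
def multTwo (C : CoxSetup2 n hn hyp W) (m1 m2 : ℤ) : hyp → ℤ :=
  fun H => cond (C.orb H) m1 m2

/-- The Coxeter number `h₁` of `W₁`. -/
def cox1 (C : CoxSetup2 n hn hyp W) : ℤ := (C.d1 (lastIdx n hn) : ℤ)

/-- The Coxeter number `h₂` of `W₂`. -/
def cox2 (C : CoxSetup2 n hn hyp W) : ℤ := (C.d2 (lastIdx n hn) : ℤ)

/-- `θ_i^{(p,q)} := ∇_{∂/∂P_i} E^{(p,q)}`. -/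
def thetaPQ (C : CoxSetup2 n hn hyp W) (i : Fin n) (p q : ℤ) : DerF n :=
  C.nabla (C.dP i) (EulPQ C p q)

/-- `𝒢^{(p,q)} = ⊕_{i=1}^n T·θ_i^{(p,q)}`. -/
def GmodPQ (C : CoxSetup2 n hn hyp W) (p q : ℤ) : Set (DerF n) :=
  {θ | ∃ c : Fin n → SS n, (∀ i, c i ∈ Tker C.toCoxSetup) ∧
    θ = ∑ i, toF (c i) • thetaPQ C i p q}


/-- `𝒢^{(k)}`: the `T`-span of `∇_{∂/∂P_1} ∇_D^{−k} ζ, …, ∇_{∂/∂P_n} ∇_D^{−k} ζ`. -/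
def GmodK (C : CoxSetup n hn hyp W) (ζ : DerF n) (k : ℕ) : Set (DerF n) :=
  {θ | ∃ c : Fin n → SS n, (∀ i, c i ∈ Tker C) ∧
    θ = ∑ i, toF (c i) • C.nabla (C.dP i) (C.nablaDinv^[k] ζ)}

/-- The sum `Σ_{k ≥ 0} 𝒢^{(k)} ⊆ Der_F`. -/
def sumGmod (C : CoxSetup n hn hyp W) (ζ : DerF n) : Set (DerF n) :=
  {θ | ∃ (N : ℕ) (g : ℕ → DerF n), (∀ k, g k ∈ GmodK C ζ k) ∧
    θ = ∑ k ∈ Finset.range N, g k}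


/-! ### Auxiliary lemmas for Statement 16 -/

section Stmt16Aux

lemma degree_one_eq {d : Fin n →₀ ℕ} (h : Finsupp.degree d = 1) :
    ∃ i, d = Finsupp.single i 1 := by
  have hd0 : d ≠ 0 := by
    intro h0; rw [h0, map_zero] at h; omega
  obtain ⟨i, hi⟩ := Finsupp.ne_iff.mp hd0
  simp only [Finsupp.coe_zero, Pi.zero_apply] at hi
  refine ⟨i, ?_⟩
  have hle := Finsupp.le_degree i d
  ext k
  by_cases hk : k = i
  · subst hk; simp; omega
  · simp [Finsupp.single_apply, Ne.symm hk]
    by_contra hdk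
    have h2 : d i + d k ≤ Finsupp.degree d := by
      have : ({i, k} : Finset (Fin n)) ⊆ d.support := by
        intro x hx
        simp only [Finset.mem_insert, Finset.mem_singleton] at hx
        rcases hx with rfl | rfl <;> simp only [Finsupp.mem_support_iff] <;> omega
      calc d i + d k = ∑ x ∈ ({i, k} : Finset (Fin n)), d x := by
            rw [Finset.sum_insert (by simpa using Ne.symm hk), Finset.sum_singleton]
        _ ≤ _ := Finset.sum_le_sum_of_subset this
    omega

lemma hom1_expand {p : SS n} (hp : p.IsHomogeneous 1) :
    p = ∑ i, C (coeff (Finsupp.single i 1) p) * X i := by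
  ext d
  rw [coeff_sum]
  by_cases hd : Finsupp.degree d = 1
  · obtain ⟨i, rfl⟩ := degree_one_eq hd
    rw [Finset.sum_eq_single i]
    · simp [coeff_C_mul, coeff_X']
    · intro b _ hb
      simp only [coeff_C_mul, coeff_X']
      rw [if_neg, mul_zero]
      intro hsing
      exact hb ((Finsupp.single_left_inj one_ne_zero).mp hsing)
    · simp
  · rw [hp.coeff_eq_zero hd]
    symm
    apply Finset.sum_eq_zero
    intro i _
    simp only [coeff_C_mul, coeff_X']
    rw [if_neg, mul_zero]
    intro hsing
    rw [← hsing] at hd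
    simp [Finsupp.degree_single] at hd

lemma prime_X_mv (j : Fin n) : Prime (X j : SS n) := by
  cases n with
  | zero => exact j.elim0
  | succ k =>
    have h0 : Prime (X (0 : Fin (k+1)) : SS (k+1)) := by
      rw [← MulEquiv.prime_iff (finSuccEquiv ℝ k).toMulEquiv]
      have : (finSuccEquiv ℝ k).toMulEquiv (X 0) = Polynomial.X :=
        finSuccEquiv_X_zero
      rw [this]
      exact Polynomial.prime_X
    have := (MulEquiv.prime_iff (renameEquiv ℝ (Equiv.swap (0 : Fin (k+1)) j)).toMulEquiv).mpr h0
    simpa using this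

lemma hom1_prime {α : SS n} (h1 : α.IsHomogeneous 1) (h0 : α ≠ 0) : Prime α := by
  classical
  set c : Fin n → ℝ := fun i => coeff (Finsupp.single i 1) α with hc
  have hexp : α = ∑ i, C (c i) * X i := hom1_expand h1
  have hj : ∃ j, c j ≠ 0 := by
    by_contra hall
    push_neg at hall
    apply h0
    rw [hexp]
    exact Finset.sum_eq_zero fun i _ => by rw [hall i, map_zero, zero_mul]
  obtain ⟨j, hcj⟩ := hj
  set β : SS n := C (c j)⁻¹ * α with hβ
  have hCinv : (C (c j)⁻¹ : SS n) * C (c j) = 1 := by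
    rw [← C_mul, inv_mul_cancel₀ hcj, C_1]
  have hCβ : C (c j) * β = α := by
    rw [hβ, ← mul_assoc, mul_comm (C (c j)), hCinv, one_mul]
  set u : Fin n → SS n := Function.update X j β with hu
  set v : Fin n → SS n := Function.update X j (2 * X j - β) with hv
  set φ : SS n →ₐ[ℝ] SS n := aeval u with hφ
  set ψ : SS n →ₐ[ℝ] SS n := aeval v with hψ
  have key : ∀ (w : Fin n → SS n) (b : SS n), Function.update X j b = w →
      aeval w α = (α - C (c j) * X j) + C (c j) * b := by
    intro w b hw
    conv_lhs => rw [hexp]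
    rw [map_sum]
    have : ∀ i : Fin n, (aeval w) (C (c i) * X i) =
        Function.update (fun i : Fin n => C (c i) * X i) j (C (c j) * b) i := by
      intro i
      by_cases hi : i = j
      · subst hi
        simp [← hw, Function.update_self, algebraMap_eq]
      · simp [← hw, Function.update_of_ne hi, algebraMap_eq]
    rw [Finset.sum_congr rfl fun i _ => this i,
      Finset.sum_update_of_mem (Finset.mem_univ j)]
    rw [hexp]
    rw [← Finset.sum_erase_add Finset.univ _ (Finset.mem_univ j), Finset.sdiff_singleton_eq_erase]
    ring
  have hφα : φ α = 2 * α - C (c j) * X j := by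
    rw [hφ, key u β hu.symm, hCβ]; ring
  have hψα : ψ α = C (c j) * X j := by
    rw [hψ, key v (2 * X j - β) hv.symm]
    rw [mul_sub, hCβ]; ring
  have hφC : ∀ r : ℝ, φ (C r) = C r := fun r => by
    rw [← algebraMap_eq]; exact φ.commutes r
  have hψC : ∀ r : ℝ, ψ (C r) = C r := fun r => by
    rw [← algebraMap_eq]; exact ψ.commutes r
  have hφXj : φ (X j) = β := by rw [hφ, aeval_X, hu, Function.update_self]
  have hψXj : ψ (X j) = 2 * X j - β := by rw [hψ, aeval_X, hv, Function.update_self]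
  have hφβ : φ β = 2 * β - X j := by
    calc φ β = C (c j)⁻¹ * (2 * α - C (c j) * X j) := by rw [hβ, map_mul, hφC, hφα]
    _ = 2 * (C (c j)⁻¹ * α) - (C (c j)⁻¹ * C (c j)) * X j := by ring
    _ = 2 * β - X j := by rw [hCinv, hβ]; ring
  have hψβ : ψ β = X j := by
    calc ψ β = C (c j)⁻¹ * (C (c j) * X j) := by rw [hβ, map_mul, hψC, hψα]
    _ = X j := by rw [← mul_assoc, hCinv, one_mul]
  have hψφ : ψ.comp φ = AlgHom.id ℝ (SS n) := by
    apply algHom_ext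
    intro i
    by_cases hi : i = j
    · subst hi
      simp only [AlgHom.comp_apply, AlgHom.id_apply]
      rw [hφXj, hψβ]
    · simp [hφ, hψ, aeval_X, hu, hv, Function.update_of_ne hi]
  have hφψ : φ.comp ψ = AlgHom.id ℝ (SS n) := by
    apply algHom_ext
    intro i
    by_cases hi : i = j
    · subst hi
      simp only [AlgHom.comp_apply, AlgHom.id_apply]
      rw [hψXj, map_sub, map_mul, map_ofNat, hφXj, hφβ]
      ring
    · simp [hφ, hψ, aeval_X, hu, hv, Function.update_of_ne hi]
  let e : SS n ≃ₐ[ℝ] SS n := AlgEquiv.ofAlgHom φ ψ hφψ hψφ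
  have hprime : Prime (e (X j)) := by
    have := (MulEquiv.prime_iff e.toMulEquiv).mpr (prime_X_mv j)
    simpa using this
  have heXj : e (X j) = β := by
    show φ (X j) = β
    exact hφXj
  rw [heXj] at hprime
  have hCunit : IsUnit (C (c j) : SS n) := (isUnit_iff_ne_zero.mpr hcj).map C
  have hassoc : Associated β α := ⟨hCunit.unit, by rw [IsUnit.unit_spec, mul_comm]; exact hCβ⟩
  exact hassoc.prime hprime

lemma toF_eq_zero_iff {p : SS n} : toF p = 0 ↔ p = 0 := by
  constructor
  · intro h
    exact IsFractionRing.injective (SS n) (FF n) (by simpa [toF] using h)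
  · rintro rfl; simp [toF]

lemma memLoc_mono {α : SS n} {f : FF n} (hα0 : α ≠ 0) {k k' : ℤ} (h : k' ≤ k)
    (hm : MemLoc α k f) : MemLoc α k' f := by
  obtain ⟨s, t, ht, heq⟩ := hm
  have hαF : toF α ≠ 0 := fun h => hα0 (toF_eq_zero_iff.mp h)
  obtain ⟨d, hd⟩ : ∃ d : ℕ, k = k' + d := ⟨(k - k').toNat, by omega⟩
  refine ⟨α ^ d * s, t, ht, ?_⟩
  rw [heq, hd, zpow_add₀ hαF, zpow_natCast]
  simp only [toF, map_mul, map_pow, mul_assoc]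

lemma memLoc_parity_bump {α : SS n} {f : FF n} (hprime : Prime α)
    (r : SS n ≃ₐ[ℝ] SS n) (e : FF n ≃ₐ[ℝ] FF n)
    (hcompat : ∀ p : SS n, e (toF p) = toF (r p))
    (hmod : ∀ g : SS n, r g - g ∈ Ideal.span ({α} : Set (SS n)))
    (hrα : r α = -α) (hf : e f = -f) {k : ℤ} (hk : Even k)
    (hm : MemLoc α k f) : MemLoc α (k + 1) f := by
  obtain ⟨s, t, ht, heq⟩ := hm
  have hα0 : α ≠ 0 := hprime.ne_zero
  have hαF : toF α ≠ 0 := fun h => hα0 (toF_eq_zero_iff.mp h)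
  have heq2 : f * toF (r t) = (toF α) ^ k * toF (-(r s)) := by
    have := congrArg e heq
    rw [map_mul, map_mul, hf, hcompat, map_zpow₀, hcompat, hcompat, hrα] at this
    have hneg : (toF (-α)) ^ k = (toF α) ^ k := by
      have : toF (-α) = -(toF α) := by simp [toF, map_neg]
      rw [this, hk.neg_zpow]
    rw [hneg] at this
    have := congrArg (fun x => -x) this
    simp only [neg_mul, neg_neg] at this
    rw [this]
    simp [toF, map_neg, map_mul]
  have hsum : f * toF (t + r t) = (toF α) ^ k * toF (s - r s) := by
    have h1 : toF (t + r t) = toF t + toF (r t) := by simp [toF, map_add]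
    rw [h1, mul_add, heq, heq2]
    have h2 : toF (s - r s) = toF s + toF (-(r s)) := by
      simp [toF, map_sub, map_neg, sub_eq_add_neg]
    rw [h2, mul_add]
  have hdvd : α ∣ (s - r s) := by
    have := hmod s
    rw [Ideal.mem_span_singleton] at this
    obtain ⟨g, hg⟩ := this
    exact ⟨-g, by rw [← neg_sub, hg]; ring⟩
  obtain ⟨g, hg⟩ := hdvd
  have htrt : t + r t ∉ Ideal.span ({α} : Set (SS n)) := by
    intro hmem
    have h2t : (2 : SS n) * t ∈ Ideal.span ({α} : Set (SS n)) := by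
      have hrtt := hmod t
      have h3 : (2 : SS n) * t = (t + r t) - (r t - t) := by ring
      rw [h3]
      exact Ideal.sub_mem _ hmem hrtt
    rw [Ideal.mem_span_singleton] at h2t
    rcases hprime.2.2 _ _ h2t with h2 | hdt
    · have hu2 : IsUnit (2 : SS n) := by
        have h := (isUnit_iff_ne_zero.mpr (two_ne_zero (α := ℝ))).map (C : ℝ →+* SS n)
        rwa [map_ofNat] at h
      exact hprime.not_unit (isUnit_of_dvd_unit h2 hu2)
    · exact ht (Ideal.mem_span_singleton.mpr hdt)
  refine ⟨g, t + r t, htrt, ?_⟩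
  rw [hsum, hg]
  rw [zpow_add_one₀ hαF]
  simp only [toF, map_mul]
  ring

lemma ip1_sub_C_mul (p q r : SS n) (c : ℝ) :
    ip1 (p - C c * q) r = ip1 p r - c * ip1 q r := by
  simp only [ip1, coeff_sub, coeff_C_mul, sub_mul, Finset.sum_sub_distrib, Finset.mul_sum,
    mul_assoc]

lemma ip1_self_ne {α : SS n} (h1 : α.IsHomogeneous 1) (h0 : α ≠ 0) : ip1 α α ≠ 0 := by
  have hj : ∃ j, coeff (Finsupp.single j 1) α ≠ 0 := by
    by_contra hall
    push_neg at hall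
    apply h0
    rw [hom1_expand h1]
    exact Finset.sum_eq_zero fun i _ => by rw [hall i, map_zero, zero_mul]
  obtain ⟨j, hj⟩ := hj
  have hpos : 0 < ip1 α α :=
    Finset.sum_pos' (fun i _ => mul_self_nonneg _)
      ⟨j, Finset.mem_univ j, mul_self_pos.mpr hj⟩
  exact ne_of_gt hpos

lemma toF_smul (c : ℝ) (p : SS n) : toF (c • p) = algebraMap ℝ (FF n) c * toF p := by
  rw [MvPolynomial.smul_eq_C_mul]
  simp only [toF, map_mul]
  rw [← MvPolynomial.algebraMap_eq, ← IsScalarTower.algebraMap_apply]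

lemma conjDer_apply (e : FF n ≃ₐ[ℝ] FF n) (θ : DerF n) (f : FF n) :
    conjDer e θ f = e (θ (e.symm f)) := rfl

end Stmt16Aux

section Stmt16Main

variable {hn : 0 < n} {hyp W : Type} [Fintype hyp] [Group W] [Fintype W]

lemma invDer_comm {Co : CoxSetup n hn hyp W} {θ : DerF n} (hθ : invDer Co θ)
    (w : W) (f : FF n) : θ (Co.actF w f) = Co.actF w (θ f) := by
  have h := congrArg (fun δ : DerF n => δ (Co.actF w f)) (hθ w)
  simp only [actDer, conjDer_apply, AlgEquiv.symm_apply_apply] at h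
  exact h.symm

lemma actS_inv_cancel (Co : CoxSetup n hn hyp W) (w : W) (p : SS n) :
    Co.actS w (Co.actS w⁻¹ p) = p := by
  rw [← AlgEquiv.mul_apply, ← map_mul, mul_inv_cancel, map_one, AlgEquiv.one_apply]

lemma refl_mod (Co : CoxSetup n hn hyp W) (H : hyp) (g : SS n) :
    Co.actS (Co.reflW H) g - g ∈ Ideal.span ({Co.α H} : Set (SS n)) := by
  set α := Co.α H with hα
  set r := Co.actS (Co.reflW H) with hr
  have hX : ∀ i : Fin n, r (X i) - X i ∈ Ideal.span ({α} : Set (SS n)) := by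
    intro i
    set c : ℝ := ip1 (X i) α / ip1 α α with hcdef
    set q : SS n := X i - C c * α with hq
    have hqhom : q.IsHomogeneous 1 :=
      (isHomogeneous_X _ _).sub (by simpa using (isHomogeneous_C _ c).mul (Co.α_hom H))
    have hip : ip1 q α = 0 := by
      rw [hq, ip1_sub_C_mul, hcdef, div_mul_cancel₀ _ (ip1_self_ne (Co.α_hom H) (Co.α_ne H)),
        sub_self]
    have hrq : r q = q := Co.reflW_fix H q hqhom hip
    have hrα : r α = -α := Co.reflW_α H
    have hrC : r (C c) = C c := by
      rw [← algebraMap_eq]; exact (Co.actS (Co.reflW H)).commutes c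
    have hri : r (X i) = q - C c * α := by
      have hXi : X i = q + C c * α := by rw [hq]; ring
      rw [hXi, map_add, map_mul, hrq, hrC, hrα]; ring
    have heq : r (X i) - X i = (-(2 * C c)) * α := by rw [hri, hq]; ring
    rw [heq]
    exact Ideal.mul_mem_left _ _ (Ideal.subset_span rfl)
  have hcomp : (Ideal.Quotient.mk (Ideal.span ({α} : Set (SS n)))).comp
      (r : SS n →+* SS n) = Ideal.Quotient.mk (Ideal.span ({α} : Set (SS n))) := by
    apply ringHom_ext
    · intro a
      simp only [RingHom.comp_apply, RingHom.coe_coe]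
      congr 1
      rw [← algebraMap_eq]
      exact (Co.actS (Co.reflW H)).commutes a
    · intro i
      simp only [RingHom.comp_apply, RingHom.coe_coe]
      rw [Ideal.Quotient.eq]
      exact hX i
  have h := RingHom.congr_fun hcomp g
  simp only [RingHom.comp_apply, RingHom.coe_coe] at h
  rw [Ideal.Quotient.eq] at h
  exact h

lemma theta_anti (Co : CoxSetup n hn hyp W) {θ : DerF n} (hθ : invDer Co θ) (H : hyp) :
    Co.actF (Co.reflW H) (θ (toF (Co.α H))) = - θ (toF (Co.α H)) := by
  rw [← invDer_comm hθ (Co.reflW H), Co.actF_compat, Co.reflW_α]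
  have : toF (-(Co.α H)) = -(toF (Co.α H)) := by simp [toF, map_neg]
  rw [this, map_neg]

lemma memLoc_transport (Co : CoxSetup n hn hyp W) (m : hyp → ℤ) {θ : DerF n}
    (hθ : invDer Co θ) (H : hyp) (w : W)
    (hm : MemLoc (Co.α (Co.σ w H)) (m (Co.σ w H)) (θ (toF (Co.α (Co.σ w H))))) :
    MemLoc (Co.α H) (m (Co.σ w H)) (θ (toF (Co.α H))) := by
  set H' := Co.σ w H with hH'
  set k := m H' with hk
  obtain ⟨c', hc'0, hc'⟩ := Co.σ_compat w⁻¹ H'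
  have hσ : Co.σ w⁻¹ H' = H := by
    rw [hH', map_inv]; exact (Co.σ w).symm_apply_apply _
  rw [hσ] at hc'
  obtain ⟨s, t, ht, heq⟩ := hm
  set e := Co.actF w⁻¹ with he
  set aF : FF n := algebraMap ℝ (FF n) c' with haF
  have haF0 : aF ≠ 0 := by
    rw [haF]
    simpa using hc'0
  have h1 : e (θ (toF (Co.α H'))) * toF (Co.actS w⁻¹ t)
      = (toF (Co.actS w⁻¹ (Co.α H'))) ^ k * toF (Co.actS w⁻¹ s) := by
    have h := congrArg e heq
    rw [map_mul, map_mul, map_zpow₀] at h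
    simpa only [he, Co.actF_compat] using h
  have h2 : e (θ (toF (Co.α H'))) = θ (toF (Co.actS w⁻¹ (Co.α H'))) := by
    rw [he, ← invDer_comm hθ w⁻¹, Co.actF_compat]
  have h3 : θ (toF (Co.actS w⁻¹ (Co.α H'))) = aF * θ (toF (Co.α H)) := by
    rw [hc', toF_smul]
    rw [Derivation.leibniz]
    rw [Derivation.map_algebraMap]
    simp [haF, smul_eq_mul]
  have h4 : toF (Co.actS w⁻¹ (Co.α H')) = aF * toF (Co.α H) := by
    rw [hc', toF_smul, haF]
  rw [h2, h3, h4, mul_zpow] at h1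
  -- h1 : aF * θ(αH) * toF t'' = aF^k * (toF αH)^k * toF s''
  have h5 : θ (toF (Co.α H)) * toF (Co.actS w⁻¹ t)
      = (aF ^ (k - 1)) * ((toF (Co.α H)) ^ k * toF (Co.actS w⁻¹ s)) := by
    have hthis := congrArg (fun x => aF⁻¹ * x) h1
    rw [← mul_assoc, ← mul_assoc, inv_mul_cancel₀ haF0, one_mul] at hthis
    have hpow : aF⁻¹ * aF ^ k = aF ^ (k - 1) := by
      rw [zpow_sub_one₀ haF0]; ring
    rw [hthis, show aF⁻¹ * (aF ^ k * toF (Co.α H) ^ k * toF ((Co.actS w⁻¹) s))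
      = (aF⁻¹ * aF ^ k) * (toF (Co.α H) ^ k * toF ((Co.actS w⁻¹) s)) by ring, hpow]
  have h6 : (aF : FF n) ^ (k - 1) = algebraMap ℝ (FF n) (c' ^ (k - 1)) := by
    rw [haF, map_zpow₀]
  refine ⟨(c' ^ (k - 1)) • (Co.actS w⁻¹ s), Co.actS w⁻¹ t, ?_, ?_⟩
  · intro hmem
    rw [Ideal.mem_span_singleton] at hmem
    have hdvd : Co.actS w (Co.α H) ∣ t := by
      have hmap := map_dvd (Co.actS w) hmem
      rwa [actS_inv_cancel] at hmap
    obtain ⟨c, hc0, hcw⟩ := Co.σ_compat w H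
    rw [hcw, ← hH'] at hdvd
    have : Co.α H' ∣ t := by
      obtain ⟨u, hu⟩ := hdvd
      exact ⟨C c * u, by rw [hu, MvPolynomial.smul_eq_C_mul]; ring⟩
    exact ht (Ideal.mem_span_singleton.mpr this)
  · rw [h5, toF_smul, ← h6]
    ring

end Stmt16Main

theorem stmt16 (C : CoxSetup n hn hyp W) (m : hyp → ℤ) :
    DmodW C m = DmodW C (mstar C m) := by
  ext θ
  constructor
  · rintro ⟨⟨hinf, hloc⟩, hinv⟩
    refine ⟨⟨hinf, ?_⟩, hinv⟩
    intro H
    obtain ⟨w, -, hw⟩ := Finset.exists_mem_eq_sup'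
      (⟨1, Finset.mem_univ (1 : W)⟩ : (Finset.univ : Finset W).Nonempty)
      (fun w : W => 2 * Int.fdiv (m (C.σ w H)) 2 + 1)
    have hms : mstar C m H = 2 * Int.fdiv (m (C.σ w H)) 2 + 1 := hw
    rw [hms]
    have base : MemLoc (C.α H) (m (C.σ w H)) (θ (toF (C.α H))) :=
      memLoc_transport C m hinv H w (hloc (C.σ w H))
    set k := m (C.σ w H) with hk
    rcases Int.even_or_odd k with hev | hodd
    · have hfe : 2 * Int.fdiv k 2 + 1 = k + 1 := by
        rw [Int.fdiv_eq_ediv_of_nonneg _ (by norm_num)]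
        rw [Int.even_iff] at hev
        omega
      rw [hfe]
      exact memLoc_parity_bump (hom1_prime (C.α_hom H) (C.α_ne H))
        (C.actS (C.reflW H)) (C.actF (C.reflW H))
        (fun p => C.actF_compat (C.reflW H) p)
        (refl_mod C H) (C.reflW_α H) (theta_anti C hinv H) hev base
    · have hfe : 2 * Int.fdiv k 2 + 1 = k := by
        rw [Int.fdiv_eq_ediv_of_nonneg _ (by norm_num)]
        rw [Int.odd_iff] at hodd
        omega
      rw [hfe]
      exact base
  · rintro ⟨⟨hinf, hloc⟩, hinv⟩
    refine ⟨⟨hinf, ?_⟩, hinv⟩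
    intro H
    have hle : m H ≤ mstar C m H := by
      have h1 := Finset.le_sup' (fun w : W => 2 * Int.fdiv (m (C.σ w H)) 2 + 1)
        (Finset.mem_univ (1 : W))
      have hσ1 : C.σ (1 : W) H = H := by rw [map_one]; rfl
      rw [hσ1] at h1
      have : m H ≤ 2 * Int.fdiv (m H) 2 + 1 := by
        rw [Int.fdiv_eq_ediv_of_nonneg _ (by norm_num)]
        omega
      exact le_trans this h1
    exact memLoc_mono (C.α_ne H) hle (hloc H)

end
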